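/- For every extended LTL formula φ containing no limit operators (no GF- or FG-subformulas), each of the formulas GF φ and FG φ is equivalent to an extended LTL formula in normal form with at most 3^{‖φ‖} · ‖φ‖ nodes. -/

import Mathlib

namespace ExtLTL

/-- Extended LTL formulas, with the limit operators `GF` and `FG` as atomic
operators. -/
inductive E (Ap : Type) : Type
  | tt    : E Ap
  | ff    : E Ap
  | pos   : Ap → E Ap
  | nlit  : Ap → E Ap
  | and   : E Ap → E Ap → E Ap
  | or    : E Ap → E Ap → E Ap
  | next  : E Ap → E Ap
  | untl  : E Ap → E Ap → E Ap
  | wuntl : E Ap → E Ap → E Ap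
  | gf    : E Ap → E Ap
  | fg    : E Ap → E Ap
  deriving DecidableEq

/-- Infinite words over the alphabet `2^Ap`. -/
abbrev Word (Ap : Type) := ℕ → Set Ap

/-- Suffix of a word starting at position `i`. -/
def suff {Ap : Type} (w : Word Ap) (i : ℕ) : Word Ap := fun n => w (n + i)

/-- Satisfaction relation for extended LTL. -/
def Sat {Ap : Type} : Word Ap → E Ap → Prop
  | _, E.tt => True
  | _, E.ff => False
  | w, E.pos a => a ∈ w 0
  | w, E.nlit a => a ∉ w 0
  | w, E.and φ ψ => Sat w φ ∧ Sat w ψ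
  | w, E.or φ ψ => Sat w φ ∨ Sat w ψ
  | w, E.next φ => Sat (suff w 1) φ
  | w, E.untl φ ψ => ∃ k, Sat (suff w k) ψ ∧ ∀ j < k, Sat (suff w j) φ
  | w, E.wuntl φ ψ => (∀ k, Sat (suff w k) φ) ∨ ∃ k, Sat (suff w k) ψ ∧ ∀ j < k, Sat (suff w j) φ
  | w, E.gf φ => ∀ i : ℕ, ∃ j : ℕ, i ≤ j ∧ Sat (suff w j) φ
  | w, E.fg φ => ∃ i : ℕ, ∀ j : ℕ, i ≤ j → Sat (suff w j) φ

/-- Equivalence of extended LTL formulas. -/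
def Equiv {Ap : Type} (φ ψ : E Ap) : Prop := ∀ w : Word Ap, Sat w φ ↔ Sat w ψ

/-- G φ := φ W ff. -/
def Gf {Ap : Type} (φ : E Ap) : E Ap := E.wuntl φ E.ff

/-- Number of nodes of the syntax tree. -/
def size {Ap : Type} : E Ap → ℕ
  | E.tt => 1
  | E.ff => 1
  | E.pos _ => 1
  | E.nlit _ => 1
  | E.and φ ψ => size φ + size ψ + 1
  | E.or φ ψ => size φ + size ψ + 1
  | E.next φ => size φ + 1
  | E.untl φ ψ => size φ + size ψ + 1
  | E.wuntl φ ψ => size φ + size ψ + 1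
  | E.gf φ => size φ + 1
  | E.fg φ => size φ + 1

variable {Ap : Type}

/-- Does the formula contain a `U`-node? -/
def hasU : E Ap → Bool
  | E.untl _ _ => true
  | E.wuntl φ ψ => hasU φ || hasU ψ
  | E.and φ ψ => hasU φ || hasU ψ
  | E.or φ ψ => hasU φ || hasU ψ
  | E.next φ => hasU φ
  | E.gf φ => hasU φ
  | E.fg φ => hasU φ
  | _ => false

/-- Does the formula contain a `W`-node? -/
def hasW : E Ap → Bool
  | E.wuntl _ _ => true
  | E.untl φ ψ => hasW φ || hasW ψ
  | E.and φ ψ => hasW φ || hasW ψ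
  | E.or φ ψ => hasW φ || hasW ψ
  | E.next φ => hasW φ
  | E.gf φ => hasW φ
  | E.fg φ => hasW φ
  | _ => false

/-- Does the formula contain a limit node? -/
def hasLimit : E Ap → Bool
  | E.gf _ => true
  | E.fg _ => true
  | E.untl φ ψ => hasLimit φ || hasLimit ψ
  | E.wuntl φ ψ => hasLimit φ || hasLimit ψ
  | E.and φ ψ => hasLimit φ || hasLimit ψ
  | E.or φ ψ => hasLimit φ || hasLimit ψ
  | E.next φ => hasLimit φ
  | _ => false

/-- Condition (1) of the normal form: no `U`-node is below a `W`-node. -/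
def noUunderW : E Ap → Prop
  | E.wuntl φ ψ => hasU φ = false ∧ hasU ψ = false
  | E.untl φ ψ => noUunderW φ ∧ noUunderW ψ
  | E.and φ ψ => noUunderW φ ∧ noUunderW ψ
  | E.or φ ψ => noUunderW φ ∧ noUunderW ψ
  | E.next φ => noUunderW φ
  | E.gf φ => noUunderW φ
  | E.fg φ => noUunderW φ
  | _ => True

/-- Condition (2) of the normal form: no limit node is below another temporal
node. -/
def noLimitUnderTemporal : E Ap → Prop
  | E.and φ ψ => noLimitUnderTemporal φ ∧ noLimitUnderTemporal ψ
  | E.or φ ψ => noLimitUnderTemporal φ ∧ noLimitUnderTemporal ψ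
  | E.next φ => hasLimit φ = false
  | E.untl φ ψ => hasLimit φ = false ∧ hasLimit ψ = false
  | E.wuntl φ ψ => hasLimit φ = false ∧ hasLimit ψ = false
  | E.gf φ => hasLimit φ = false
  | E.fg φ => hasLimit φ = false
  | _ => True

/-- Condition (3) of the normal form: no `W`-node is below a `GF`-node and no
`U`-node is below an `FG`-node. -/
def noWunderGF : E Ap → Prop
  | E.and φ ψ => noWunderGF φ ∧ noWunderGF ψ
  | E.or φ ψ => noWunderGF φ ∧ noWunderGF ψ
  | E.next φ => noWunderGF φ
  | E.untl φ ψ => noWunderGF φ ∧ noWunderGF ψ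
  | E.wuntl φ ψ => noWunderGF φ ∧ noWunderGF ψ
  | E.gf φ => hasW φ = false ∧ noWunderGF φ
  | E.fg φ => hasU φ = false ∧ noWunderGF φ
  | _ => True

/-- Normal form (Definition of normal form in the paper). -/
def NormalForm (φ : E Ap) : Prop :=
  noUunderW φ ∧ noLimitUnderTemporal φ ∧ noWunderGF φ


/-! ### Auxiliary machinery -/

attribute [local instance] Classical.propDecidable

set_option linter.unusedVariables false

/-- `mu M` replaces every `W`-subformula in `M` by `tt` and every other
`W`-subformula by the corresponding `U`-formula.  The result is `W`-free
(for limit-free input). -/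
noncomputable def mu (M : List (E Ap)) : E Ap → E Ap
  | E.tt => E.tt
  | E.ff => E.ff
  | E.pos a => E.pos a
  | E.nlit a => E.nlit a
  | E.and a b => E.and (mu M a) (mu M b)
  | E.or a b => E.or (mu M a) (mu M b)
  | E.next a => E.next (mu M a)
  | E.untl a b => E.untl (mu M a) (mu M b)
  | E.wuntl a b => if E.wuntl a b ∈ M then E.tt else E.untl (mu M a) (mu M b)
  | E.gf a => E.gf a
  | E.fg a => E.fg a

/-- `nu N` replaces every `U`-subformula in `N` by the corresponding
`W`-formula and every other `U`-subformula by `ff`.  The result is `U`-free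
(for limit-free input). -/
noncomputable def nu (N : List (E Ap)) : E Ap → E Ap
  | E.tt => E.tt
  | E.ff => E.ff
  | E.pos a => E.pos a
  | E.nlit a => E.nlit a
  | E.and a b => E.and (nu N a) (nu N b)
  | E.or a b => E.or (nu N a) (nu N b)
  | E.next a => E.next (nu N a)
  | E.untl a b => if E.untl a b ∈ N then E.wuntl (nu N a) (nu N b) else E.ff
  | E.wuntl a b => E.wuntl (nu N a) (nu N b)
  | E.gf a => E.gf a
  | E.fg a => E.fg a

/-- Left argument of a binary temporal formula. -/
def argl : E Ap → E Ap
  | E.untl a _ => a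
  | E.wuntl a _ => a
  | _ => E.tt

/-- Right argument of a binary temporal formula. -/
def argr : E Ap → E Ap
  | E.untl _ b => b
  | E.wuntl _ b => b
  | _ => E.tt

/-- The list of `W`-subformulas (with multiplicity). -/
def Wsubs : E Ap → List (E Ap)
  | E.and a b => Wsubs a ++ Wsubs b
  | E.or a b => Wsubs a ++ Wsubs b
  | E.next a => Wsubs a
  | E.untl a b => Wsubs a ++ Wsubs b
  | E.wuntl a b => E.wuntl a b :: (Wsubs a ++ Wsubs b)
  | E.gf a => Wsubs a
  | E.fg a => Wsubs a
  | _ => []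

/-- The list of `U`-subformulas (with multiplicity). -/
def Usubs : E Ap → List (E Ap)
  | E.and a b => Usubs a ++ Usubs b
  | E.or a b => Usubs a ++ Usubs b
  | E.next a => Usubs a
  | E.untl a b => E.untl a b :: (Usubs a ++ Usubs b)
  | E.wuntl a b => Usubs a ++ Usubs b
  | E.gf a => Usubs a
  | E.fg a => Usubs a
  | _ => []

/-- Big conjunction. -/
def bigAnd : List (E Ap) → E Ap
  | [] => E.tt
  | [x] => x
  | x :: y :: t => E.and x (bigAnd (y :: t))

/-- Big disjunction. -/
def bigOr : List (E Ap) → E Ap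
  | [] => E.ff
  | [x] => x
  | x :: y :: t => E.or x (bigOr (y :: t))

lemma suff_suff (w : Word Ap) (i k : ℕ) : suff (suff w i) k = suff w (k + i) := by
  funext n; simp [suff, Nat.add_assoc]

lemma suff_zero (w : Word Ap) : suff w 0 = w := by funext n; simp [suff]

lemma sat_untl_shift {w : Word Ap} {j : ℕ} {a b : E Ap} :
    Sat (suff w j) (E.untl a b) ↔
      ∃ k, Sat (suff w (k + j)) b ∧ ∀ i < k, Sat (suff w (i + j)) a := by
  simp [Sat, suff_suff]

lemma sat_wuntl_shift {w : Word Ap} {j : ℕ} {a b : E Ap} :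
    Sat (suff w j) (E.wuntl a b) ↔
      (∀ k, Sat (suff w (k + j)) a) ∨
      ∃ k, Sat (suff w (k + j)) b ∧ ∀ i < k, Sat (suff w (i + j)) a := by
  simp [Sat, suff_suff]

lemma sat_next_shift {w : Word Ap} {j : ℕ} {a : E Ap} :
    Sat (suff w j) (E.next a) ↔ Sat (suff w (1 + j)) a := by
  simp [Sat, suff_suff]

lemma sat_bigAnd (w : Word Ap) : ∀ L : List (E Ap), Sat w (bigAnd L) ↔ ∀ x ∈ L, Sat w x
  | [] => by simp [bigAnd, Sat]
  | [x] => by simp [bigAnd]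
  | x :: y :: t => by
      have h := sat_bigAnd w (y :: t)
      simp only [bigAnd, Sat, h]
      constructor
      · rintro ⟨h1, h2⟩ z hz
        rcases List.mem_cons.1 hz with rfl | hz
        · exact h1
        · exact h2 z hz
      · intro h
        exact ⟨h x (by simp), fun z hz => h z (List.mem_cons_of_mem _ hz)⟩

lemma sat_bigOr (w : Word Ap) : ∀ L : List (E Ap), Sat w (bigOr L) ↔ ∃ x ∈ L, Sat w x
  | [] => by simp [bigOr, Sat]
  | [x] => by simp [bigOr]
  | x :: y :: t => by
      have h := sat_bigOr w (y :: t)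
      simp only [bigOr, Sat, h]
      constructor
      · rintro (h1 | ⟨z, hz, h2⟩)
        · exact ⟨x, by simp, h1⟩
        · exact ⟨z, List.mem_cons_of_mem _ hz, h2⟩
      · rintro ⟨z, hz, h2⟩
        rcases List.mem_cons.1 hz with rfl | hz
        · exact Or.inl h2
        · exact Or.inr ⟨z, hz, h2⟩


lemma hasW_mu (M : List (E Ap)) : ∀ x : E Ap, hasLimit x = false → hasW (mu M x) = false := by
  intro x
  induction x with
  | tt => intro _; simp [mu, hasW]
  | ff => intro _; simp [mu, hasW]
  | pos a => intro _; simp [mu, hasW]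
  | nlit a => intro _; simp [mu, hasW]
  | and a b iha ihb => intro h; simp [hasLimit] at h; simp [mu, hasW, iha h.1, ihb h.2]
  | or a b iha ihb => intro h; simp [hasLimit] at h; simp [mu, hasW, iha h.1, ihb h.2]
  | next a iha => intro h; simp [hasLimit] at h; simp [mu, hasW, iha h]
  | untl a b iha ihb => intro h; simp [hasLimit] at h; simp [mu, hasW, iha h.1, ihb h.2]
  | wuntl a b iha ihb =>
      intro h; simp [hasLimit] at h
      by_cases hm : E.wuntl a b ∈ M
      · simp [mu, hm, hasW]
      · simp [mu, hm, hasW, iha h.1, ihb h.2]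
  | gf a iha => intro h; simp [hasLimit] at h
  | fg a iha => intro h; simp [hasLimit] at h

lemma hasLimit_mu (M : List (E Ap)) : ∀ x : E Ap, hasLimit x = false → hasLimit (mu M x) = false := by
  intro x
  induction x with
  | tt => intro _; simp [mu, hasLimit]
  | ff => intro _; simp [mu, hasLimit]
  | pos a => intro _; simp [mu, hasLimit]
  | nlit a => intro _; simp [mu, hasLimit]
  | and a b iha ihb => intro h; simp [hasLimit] at h; simp [mu, hasLimit, iha h.1, ihb h.2]
  | or a b iha ihb => intro h; simp [hasLimit] at h; simp [mu, hasLimit, iha h.1, ihb h.2]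
  | next a iha => intro h; simp [hasLimit] at h; simp [mu, hasLimit, iha h]
  | untl a b iha ihb => intro h; simp [hasLimit] at h; simp [mu, hasLimit, iha h.1, ihb h.2]
  | wuntl a b iha ihb =>
      intro h; simp [hasLimit] at h
      by_cases hm : E.wuntl a b ∈ M
      · simp [mu, hm, hasLimit]
      · simp [mu, hm, hasLimit, iha h.1, ihb h.2]
  | gf a iha => intro h; simp [hasLimit] at h
  | fg a iha => intro h; simp [hasLimit] at h

lemma hasU_nu (N : List (E Ap)) : ∀ x : E Ap, hasLimit x = false → hasU (nu N x) = false := by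
  intro x
  induction x with
  | tt => intro _; simp [nu, hasU]
  | ff => intro _; simp [nu, hasU]
  | pos a => intro _; simp [nu, hasU]
  | nlit a => intro _; simp [nu, hasU]
  | and a b iha ihb => intro h; simp [hasLimit] at h; simp [nu, hasU, iha h.1, ihb h.2]
  | or a b iha ihb => intro h; simp [hasLimit] at h; simp [nu, hasU, iha h.1, ihb h.2]
  | next a iha => intro h; simp [hasLimit] at h; simp [nu, hasU, iha h]
  | untl a b iha ihb =>
      intro h; simp [hasLimit] at h
      by_cases hn : E.untl a b ∈ N
      · simp [nu, hn, hasU, iha h.1, ihb h.2]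
      · simp [nu, hn, hasU]
  | wuntl a b iha ihb => intro h; simp [hasLimit] at h; simp [nu, hasU, iha h.1, ihb h.2]
  | gf a iha => intro h; simp [hasLimit] at h
  | fg a iha => intro h; simp [hasLimit] at h

lemma hasLimit_nu (N : List (E Ap)) : ∀ x : E Ap, hasLimit x = false → hasLimit (nu N x) = false := by
  intro x
  induction x with
  | tt => intro _; simp [nu, hasLimit]
  | ff => intro _; simp [nu, hasLimit]
  | pos a => intro _; simp [nu, hasLimit]
  | nlit a => intro _; simp [nu, hasLimit]
  | and a b iha ihb => intro h; simp [hasLimit] at h; simp [nu, hasLimit, iha h.1, ihb h.2]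
  | or a b iha ihb => intro h; simp [hasLimit] at h; simp [nu, hasLimit, iha h.1, ihb h.2]
  | next a iha => intro h; simp [hasLimit] at h; simp [nu, hasLimit, iha h]
  | untl a b iha ihb =>
      intro h; simp [hasLimit] at h
      by_cases hn : E.untl a b ∈ N
      · simp [nu, hn, hasLimit, iha h.1, ihb h.2]
      · simp [nu, hn, hasLimit]
  | wuntl a b iha ihb => intro h; simp [hasLimit] at h; simp [nu, hasLimit, iha h.1, ihb h.2]
  | gf a iha => intro h; simp [hasLimit] at h
  | fg a iha => intro h; simp [hasLimit] at h

lemma size_mu_le (M : List (E Ap)) : ∀ x : E Ap, size (mu M x) ≤ size x := by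
  intro x
  induction x with
  | tt => simp [mu]
  | ff => simp [mu]
  | pos a => simp [mu]
  | nlit a => simp [mu]
  | and a b iha ihb => simp only [mu, size]; omega
  | or a b iha ihb => simp only [mu, size]; omega
  | next a iha => simp only [mu, size]; omega
  | untl a b iha ihb => simp only [mu, size]; omega
  | wuntl a b iha ihb =>
      by_cases hm : E.wuntl a b ∈ M
      · simp only [mu, if_pos hm, size]; omega
      · simp only [mu, if_neg hm, size]; omega
  | gf a iha => simp [mu]
  | fg a iha => simp [mu]

lemma size_nu_le (N : List (E Ap)) : ∀ x : E Ap, size (nu N x) ≤ size x := by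
  intro x
  induction x with
  | tt => simp [nu]
  | ff => simp [nu]
  | pos a => simp [nu]
  | nlit a => simp [nu]
  | and a b iha ihb => simp only [nu, size]; omega
  | or a b iha ihb => simp only [nu, size]; omega
  | next a iha => simp only [nu, size]; omega
  | untl a b iha ihb =>
      by_cases hn : E.untl a b ∈ N
      · simp only [nu, if_pos hn, size]; omega
      · simp only [nu, if_neg hn, size]; omega
  | wuntl a b iha ihb => simp only [nu, size]; omega
  | gf a iha => simp [nu]
  | fg a iha => simp [nu]

lemma size_pos' : ∀ x : E Ap, 1 ≤ size x := by
  intro x; induction x <;> simp [size] <;> omega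


lemma noUunderW_of_hasU_or_hasW (x : E Ap) (h : hasU x = false ∨ hasW x = false) :
    noUunderW x := by
  induction x with
  | tt => trivial
  | ff => trivial
  | pos a => trivial
  | nlit a => trivial
  | and a b iha ihb =>
      simp [hasU, hasW] at h
      exact ⟨iha (h.imp And.left And.left), ihb (h.imp And.right And.right)⟩
  | or a b iha ihb =>
      simp [hasU, hasW] at h
      exact ⟨iha (h.imp And.left And.left), ihb (h.imp And.right And.right)⟩
  | next a iha =>
      simp [hasU, hasW] at h
      exact iha h
  | untl a b iha ihb =>
      simp [hasU, hasW] at h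
      exact ⟨iha (Or.inr h.1), ihb (Or.inr h.2)⟩
  | wuntl a b iha ihb =>
      simp [hasU, hasW] at h
      exact ⟨h.1, h.2⟩
  | gf a iha =>
      simp [hasU, hasW] at h
      exact iha h
  | fg a iha =>
      simp [hasU, hasW] at h
      exact iha h

lemma noLimitUnderTemporal_of_hasLimit (x : E Ap) (h : hasLimit x = false) :
    noLimitUnderTemporal x := by
  induction x with
  | tt => trivial
  | ff => trivial
  | pos a => trivial
  | nlit a => trivial
  | and a b iha ihb => simp [hasLimit] at h; exact ⟨iha h.1, ihb h.2⟩
  | or a b iha ihb => simp [hasLimit] at h; exact ⟨iha h.1, ihb h.2⟩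
  | next a iha => simp [hasLimit] at h; exact h
  | untl a b iha ihb => simp [hasLimit] at h; exact ⟨h.1, h.2⟩
  | wuntl a b iha ihb => simp [hasLimit] at h; exact ⟨h.1, h.2⟩
  | gf a iha => simp [hasLimit] at h
  | fg a iha => simp [hasLimit] at h

lemma noWunderGF_of_hasLimit (x : E Ap) (h : hasLimit x = false) :
    noWunderGF x := by
  induction x with
  | tt => trivial
  | ff => trivial
  | pos a => trivial
  | nlit a => trivial
  | and a b iha ihb => simp [hasLimit] at h; exact ⟨iha h.1, ihb h.2⟩
  | or a b iha ihb => simp [hasLimit] at h; exact ⟨iha h.1, ihb h.2⟩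
  | next a iha => simp [hasLimit] at h; exact iha h
  | untl a b iha ihb => simp [hasLimit] at h; exact ⟨iha h.1, ihb h.2⟩
  | wuntl a b iha ihb => simp [hasLimit] at h; exact ⟨iha h.1, ihb h.2⟩
  | gf a iha => simp [hasLimit] at h
  | fg a iha => simp [hasLimit] at h

lemma normalForm_gf_of (x : E Ap) (hW : hasW x = false) (hL : hasLimit x = false) :
    NormalForm (E.gf x) :=
  ⟨noUunderW_of_hasU_or_hasW x (Or.inr hW), hL,
    hW, noWunderGF_of_hasLimit x hL⟩

lemma normalForm_fg_of (x : E Ap) (hU : hasU x = false) (hL : hasLimit x = false) :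
    NormalForm (E.fg x) :=
  ⟨noUunderW_of_hasU_or_hasW x (Or.inl hU), hL,
    hU, noWunderGF_of_hasLimit x hL⟩

lemma normalForm_tt : NormalForm (E.tt : E Ap) := ⟨trivial, trivial, trivial⟩

lemma normalForm_ff : NormalForm (E.ff : E Ap) := ⟨trivial, trivial, trivial⟩

lemma normalForm_and {a b : E Ap} (ha : NormalForm a) (hb : NormalForm b) :
    NormalForm (E.and a b) :=
  ⟨⟨ha.1, hb.1⟩, ⟨ha.2.1, hb.2.1⟩, ⟨ha.2.2, hb.2.2⟩⟩

lemma normalForm_or {a b : E Ap} (ha : NormalForm a) (hb : NormalForm b) :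
    NormalForm (E.or a b) :=
  ⟨⟨ha.1, hb.1⟩, ⟨ha.2.1, hb.2.1⟩, ⟨ha.2.2, hb.2.2⟩⟩

lemma normalForm_bigAnd : ∀ L : List (E Ap), (∀ x ∈ L, NormalForm x) → NormalForm (bigAnd L)
  | [], _ => normalForm_tt
  | [x], h => h x (by simp [bigAnd])
  | x :: y :: t, h => by
      rw [bigAnd]
      exact normalForm_and (h x (by simp))
        (normalForm_bigAnd (y :: t) (fun z hz => h z (List.mem_cons_of_mem _ hz)))

lemma normalForm_bigOr : ∀ L : List (E Ap), (∀ x ∈ L, NormalForm x) → NormalForm (bigOr L)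
  | [], _ => normalForm_ff
  | [x], h => h x (by simp [bigOr])
  | x :: y :: t, h => by
      rw [bigOr]
      exact normalForm_or (h x (by simp))
        (normalForm_bigOr (y :: t) (fun z hz => h z (List.mem_cons_of_mem _ hz)))


lemma Wsubs_closure : ∀ x : E Ap, hasLimit x = false → ∀ ψ ∈ Wsubs x,
    ∃ a b : E Ap, ψ = E.wuntl a b ∧ hasLimit a = false ∧
      (∀ z ∈ Wsubs a, z ∈ Wsubs x) ∧ (∀ z ∈ Usubs a, z ∈ Usubs x) := by
  intro x
  induction x with
  | tt => intro _ ψ h; simp [Wsubs] at h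
  | ff => intro _ ψ h; simp [Wsubs] at h
  | pos a => intro _ ψ h; simp [Wsubs] at h
  | nlit a => intro _ ψ h; simp [Wsubs] at h
  | and a b iha ihb =>
      intro hL ψ h
      simp [hasLimit] at hL
      rcases List.mem_append.1 h with h | h
      · obtain ⟨c, d, rfl, h1, h2, h3⟩ := iha hL.1 ψ h
        exact ⟨c, d, rfl, h1, fun z hz => List.mem_append.2 (Or.inl (h2 z hz)),
          fun z hz => List.mem_append.2 (Or.inl (h3 z hz))⟩
      · obtain ⟨c, d, rfl, h1, h2, h3⟩ := ihb hL.2 ψ h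
        exact ⟨c, d, rfl, h1, fun z hz => List.mem_append.2 (Or.inr (h2 z hz)),
          fun z hz => List.mem_append.2 (Or.inr (h3 z hz))⟩
  | or a b iha ihb =>
      intro hL ψ h
      simp [hasLimit] at hL
      rcases List.mem_append.1 h with h | h
      · obtain ⟨c, d, rfl, h1, h2, h3⟩ := iha hL.1 ψ h
        exact ⟨c, d, rfl, h1, fun z hz => List.mem_append.2 (Or.inl (h2 z hz)),
          fun z hz => List.mem_append.2 (Or.inl (h3 z hz))⟩
      · obtain ⟨c, d, rfl, h1, h2, h3⟩ := ihb hL.2 ψ h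
        exact ⟨c, d, rfl, h1, fun z hz => List.mem_append.2 (Or.inr (h2 z hz)),
          fun z hz => List.mem_append.2 (Or.inr (h3 z hz))⟩
  | next a iha =>
      intro hL ψ h
      simp [hasLimit] at hL
      exact iha hL ψ h
  | untl a b iha ihb =>
      intro hL ψ h
      simp [hasLimit] at hL
      rcases List.mem_append.1 h with h | h
      · obtain ⟨c, d, rfl, h1, h2, h3⟩ := iha hL.1 ψ h
        exact ⟨c, d, rfl, h1, fun z hz => List.mem_append.2 (Or.inl (h2 z hz)),
          fun z hz => List.mem_cons_of_mem _ (List.mem_append.2 (Or.inl (h3 z hz)))⟩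
      · obtain ⟨c, d, rfl, h1, h2, h3⟩ := ihb hL.2 ψ h
        exact ⟨c, d, rfl, h1, fun z hz => List.mem_append.2 (Or.inr (h2 z hz)),
          fun z hz => List.mem_cons_of_mem _ (List.mem_append.2 (Or.inr (h3 z hz)))⟩
  | wuntl a b iha ihb =>
      intro hL ψ h
      simp [hasLimit] at hL
      rcases List.mem_cons.1 h with rfl | h
      · exact ⟨a, b, rfl, hL.1,
          fun z hz => List.mem_cons_of_mem _ (List.mem_append.2 (Or.inl hz)),
          fun z hz => List.mem_append.2 (Or.inl hz)⟩
      rcases List.mem_append.1 h with h | h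
      · obtain ⟨c, d, rfl, h1, h2, h3⟩ := iha hL.1 ψ h
        exact ⟨c, d, rfl, h1,
          fun z hz => List.mem_cons_of_mem _ (List.mem_append.2 (Or.inl (h2 z hz))),
          fun z hz => List.mem_append.2 (Or.inl (h3 z hz))⟩
      · obtain ⟨c, d, rfl, h1, h2, h3⟩ := ihb hL.2 ψ h
        exact ⟨c, d, rfl, h1,
          fun z hz => List.mem_cons_of_mem _ (List.mem_append.2 (Or.inr (h2 z hz))),
          fun z hz => List.mem_append.2 (Or.inr (h3 z hz))⟩
  | gf a iha => intro hL; simp [hasLimit] at hL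
  | fg a iha => intro hL; simp [hasLimit] at hL

lemma Usubs_closure : ∀ x : E Ap, hasLimit x = false → ∀ ψ ∈ Usubs x,
    ∃ a b : E Ap, ψ = E.untl a b ∧ hasLimit b = false ∧
      (∀ z ∈ Wsubs b, z ∈ Wsubs x) ∧ (∀ z ∈ Usubs b, z ∈ Usubs x) := by
  intro x
  induction x with
  | tt => intro _ ψ h; simp [Usubs] at h
  | ff => intro _ ψ h; simp [Usubs] at h
  | pos a => intro _ ψ h; simp [Usubs] at h
  | nlit a => intro _ ψ h; simp [Usubs] at h
  | and a b iha ihb =>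
      intro hL ψ h
      simp [hasLimit] at hL
      rcases List.mem_append.1 h with h | h
      · obtain ⟨c, d, rfl, h1, h2, h3⟩ := iha hL.1 ψ h
        exact ⟨c, d, rfl, h1, fun z hz => List.mem_append.2 (Or.inl (h2 z hz)),
          fun z hz => List.mem_append.2 (Or.inl (h3 z hz))⟩
      · obtain ⟨c, d, rfl, h1, h2, h3⟩ := ihb hL.2 ψ h
        exact ⟨c, d, rfl, h1, fun z hz => List.mem_append.2 (Or.inr (h2 z hz)),
          fun z hz => List.mem_append.2 (Or.inr (h3 z hz))⟩
  | or a b iha ihb =>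
      intro hL ψ h
      simp [hasLimit] at hL
      rcases List.mem_append.1 h with h | h
      · obtain ⟨c, d, rfl, h1, h2, h3⟩ := iha hL.1 ψ h
        exact ⟨c, d, rfl, h1, fun z hz => List.mem_append.2 (Or.inl (h2 z hz)),
          fun z hz => List.mem_append.2 (Or.inl (h3 z hz))⟩
      · obtain ⟨c, d, rfl, h1, h2, h3⟩ := ihb hL.2 ψ h
        exact ⟨c, d, rfl, h1, fun z hz => List.mem_append.2 (Or.inr (h2 z hz)),
          fun z hz => List.mem_append.2 (Or.inr (h3 z hz))⟩
  | next a iha =>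
      intro hL ψ h
      simp [hasLimit] at hL
      exact iha hL ψ h
  | untl a b iha ihb =>
      intro hL ψ h
      simp [hasLimit] at hL
      rcases List.mem_cons.1 h with rfl | h
      · exact ⟨a, b, rfl, hL.2,
          fun z hz => List.mem_append.2 (Or.inr hz),
          fun z hz => List.mem_cons_of_mem _ (List.mem_append.2 (Or.inr hz))⟩
      rcases List.mem_append.1 h with h | h
      · obtain ⟨c, d, rfl, h1, h2, h3⟩ := iha hL.1 ψ h
        exact ⟨c, d, rfl, h1,
          fun z hz => List.mem_append.2 (Or.inl (h2 z hz)),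
          fun z hz => List.mem_cons_of_mem _ (List.mem_append.2 (Or.inl (h3 z hz)))⟩
      · obtain ⟨c, d, rfl, h1, h2, h3⟩ := ihb hL.2 ψ h
        exact ⟨c, d, rfl, h1,
          fun z hz => List.mem_append.2 (Or.inr (h2 z hz)),
          fun z hz => List.mem_cons_of_mem _ (List.mem_append.2 (Or.inr (h3 z hz)))⟩
  | wuntl a b iha ihb =>
      intro hL ψ h
      simp [hasLimit] at hL
      rcases List.mem_append.1 h with h | h
      · obtain ⟨c, d, rfl, h1, h2, h3⟩ := iha hL.1 ψ h
        exact ⟨c, d, rfl, h1,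
          fun z hz => List.mem_cons_of_mem _ (List.mem_append.2 (Or.inl (h2 z hz))),
          fun z hz => List.mem_append.2 (Or.inl (h3 z hz))⟩
      · obtain ⟨c, d, rfl, h1, h2, h3⟩ := ihb hL.2 ψ h
        exact ⟨c, d, rfl, h1,
          fun z hz => List.mem_cons_of_mem _ (List.mem_append.2 (Or.inr (h2 z hz))),
          fun z hz => List.mem_append.2 (Or.inr (h3 z hz))⟩
  | gf a iha => intro hL; simp [hasLimit] at hL
  | fg a iha => intro hL; simp [hasLimit] at hL

lemma size_argl_lt : ∀ x : E Ap, ∀ ψ ∈ Wsubs x, size (argl ψ) < size x := by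
  intro x
  induction x with
  | tt => intro ψ h; simp [Wsubs] at h
  | ff => intro ψ h; simp [Wsubs] at h
  | pos a => intro ψ h; simp [Wsubs] at h
  | nlit a => intro ψ h; simp [Wsubs] at h
  | and a b iha ihb =>
      intro ψ h
      rcases List.mem_append.1 h with h | h
      · have := iha ψ h; simp [size]; omega
      · have := ihb ψ h; simp [size]; omega
  | or a b iha ihb =>
      intro ψ h
      rcases List.mem_append.1 h with h | h
      · have := iha ψ h; simp [size]; omega
      · have := ihb ψ h; simp [size]; omega
  | next a iha =>
      intro ψ h
      have := iha ψ h; simp [size]; omega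
  | untl a b iha ihb =>
      intro ψ h
      rcases List.mem_append.1 h with h | h
      · have := iha ψ h; simp [size]; omega
      · have := ihb ψ h; simp [size]; omega
  | wuntl a b iha ihb =>
      intro ψ h
      rcases List.mem_cons.1 h with rfl | h
      · simp [argl, size]
      rcases List.mem_append.1 h with h | h
      · have := iha ψ h; simp [size]; omega
      · have := ihb ψ h; simp [size]; omega
  | gf a iha =>
      intro ψ h
      have := iha ψ h; simp [size]; omega
  | fg a iha =>
      intro ψ h
      have := iha ψ h; simp [size]; omega

lemma size_argr_lt : ∀ x : E Ap, ∀ ψ ∈ Usubs x, size (argr ψ) < size x := by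
  intro x
  induction x with
  | tt => intro ψ h; simp [Usubs] at h
  | ff => intro ψ h; simp [Usubs] at h
  | pos a => intro ψ h; simp [Usubs] at h
  | nlit a => intro ψ h; simp [Usubs] at h
  | and a b iha ihb =>
      intro ψ h
      rcases List.mem_append.1 h with h | h
      · have := iha ψ h; simp [size]; omega
      · have := ihb ψ h; simp [size]; omega
  | or a b iha ihb =>
      intro ψ h
      rcases List.mem_append.1 h with h | h
      · have := iha ψ h; simp [size]; omega
      · have := ihb ψ h; simp [size]; omega
  | next a iha =>
      intro ψ h
      have := iha ψ h; simp [size]; omega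
  | untl a b iha ihb =>
      intro ψ h
      rcases List.mem_cons.1 h with rfl | h
      · simp [argr, size]
      rcases List.mem_append.1 h with h | h
      · have := iha ψ h; simp [size]; omega
      · have := ihb ψ h; simp [size]; omega
  | wuntl a b iha ihb =>
      intro ψ h
      rcases List.mem_append.1 h with h | h
      · have := iha ψ h; simp [size]; omega
      · have := ihb ψ h; simp [size]; omega
  | gf a iha =>
      intro ψ h
      have := iha ψ h; simp [size]; omega
  | fg a iha =>
      intro ψ h
      have := iha ψ h; simp [size]; omega

lemma count_lt_size : ∀ x : E Ap, 2 * ((Wsubs x).length + (Usubs x).length) < size x := by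
  intro x
  induction x with
  | tt => simp [Wsubs, Usubs, size]
  | ff => simp [Wsubs, Usubs, size]
  | pos a => simp [Wsubs, Usubs, size]
  | nlit a => simp [Wsubs, Usubs, size]
  | and a b iha ihb => simp only [Wsubs, Usubs, size, List.length_append]; omega
  | or a b iha ihb => simp only [Wsubs, Usubs, size, List.length_append]; omega
  | next a iha => simp only [Wsubs, Usubs, size]; omega
  | untl a b iha ihb =>
      simp only [Wsubs, Usubs, size, List.length_append, List.length_cons]; omega
  | wuntl a b iha ihb =>
      simp only [Wsubs, Usubs, size, List.length_append, List.length_cons]; omega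
  | gf a iha => simp only [Wsubs, Usubs, size]; omega
  | fg a iha => simp only [Wsubs, Usubs, size]; omega


lemma exists_threshold {α : Type*} (P : α → ℕ → Prop) :
    ∀ L : List α, (∀ x ∈ L, ∃ i, ∀ j, i ≤ j → P x j) →
      ∃ i, ∀ x ∈ L, ∀ j, i ≤ j → P x j
  | [], _ => ⟨0, by simp⟩
  | x :: t, h => by
      obtain ⟨i₁, h1⟩ := h x (by simp)
      obtain ⟨i₂, h2⟩ := exists_threshold P t (fun z hz => h z (List.mem_cons_of_mem _ hz))
      refine ⟨max i₁ i₂, ?_⟩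
      intro z hz j hj
      rcases List.mem_cons.1 hz with rfl | hz
      · exact h1 j (le_trans (le_max_left _ _) hj)
      · exact h2 z hz j (le_trans (le_max_right _ _) hj)

lemma size_bigAnd_le (c : ℕ) : ∀ L : List (E Ap), L ≠ [] → (∀ x ∈ L, size x ≤ c) →
    size (bigAnd L) + 1 ≤ (c + 1) * L.length
  | [], h, _ => absurd rfl h
  | [x], _, h => by
      simp only [bigAnd, List.length_cons, List.length_nil]
      have := h x (by simp); omega
  | x :: y :: t, _, h => by
      rw [bigAnd]
      have h1 := h x (by simp)
      have h2 := size_bigAnd_le c (y :: t) (by simp)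
        (fun z hz => h z (List.mem_cons_of_mem _ hz))
      simp only [size, List.length_cons] at *
      ring_nf
      ring_nf at h2
      omega

lemma size_bigOr_le (c : ℕ) : ∀ L : List (E Ap), L ≠ [] → (∀ x ∈ L, size x ≤ c) →
    size (bigOr L) + 1 ≤ (c + 1) * L.length
  | [], h, _ => absurd rfl h
  | [x], _, h => by
      simp only [bigOr, List.length_cons, List.length_nil]
      have := h x (by simp); omega
  | x :: y :: t, _, h => by
      rw [bigOr]
      have h1 := h x (by simp)
      have h2 := size_bigOr_le c (y :: t) (by simp)
        (fun z hz => h z (List.mem_cons_of_mem _ hz))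
      simp only [size, List.length_cons] at *
      ring_nf
      ring_nf at h2
      omega

lemma arith_bound (n r : ℕ) (hn : 1 ≤ n) (hr : 2 * r < n) :
    2 ^ r * ((r + 1) * (n + 2)) ≤ 3 ^ n * n + 1 := by
  rcases Nat.eq_zero_or_pos r with rfl | hrpos
  · -- n + 2 ≤ 3^n * n + 1
    have h3 : 3 ≤ 3 ^ n := by
      calc 3 = 3 ^ 1 := rfl
      _ ≤ 3 ^ n := Nat.pow_le_pow_right (by norm_num) hn
    have : 3 * n ≤ 3 ^ n * n := Nat.mul_le_mul_right n h3
    omega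
  · have key : ∀ s : ℕ, 1 ≤ s → (s + 1) * 2 ^ s ≤ 9 ^ s := by
      intro s hs
      induction s with
      | zero => omega
      | succ t ih =>
          rcases Nat.eq_zero_or_pos t with rfl | ht
          · norm_num
          · have h1 := ih ht
            have h2 : (t + 1 + 1) * 2 ^ (t + 1) ≤ 4 * ((t + 1) * 2 ^ t) := by
              ring_nf; omega
            calc (t + 1 + 1) * 2 ^ (t + 1) ≤ 4 * ((t + 1) * 2 ^ t) := h2
              _ ≤ 4 * 9 ^ t := by omega
              _ ≤ 9 * 9 ^ t := by omega
              _ = 9 ^ (t + 1) := by ring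
    have h9 : (r + 1) * 2 ^ r ≤ 9 ^ r := key r hrpos
    have h9' : (9 : ℕ) ^ r = 3 ^ (2 * r) := by
      rw [pow_mul]; norm_num
    have h2r : 3 ^ (2 * r) ≤ 3 ^ (n - 1) :=
      Nat.pow_le_pow_right (by norm_num) (by omega)
    have hn2 : n + 2 ≤ 3 * n := by omega
    calc 2 ^ r * ((r + 1) * (n + 2)) = ((r + 1) * 2 ^ r) * (n + 2) := by ring
      _ ≤ 9 ^ r * (3 * n) := Nat.mul_le_mul h9 hn2
      _ ≤ 3 ^ (n - 1) * (3 * n) := by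
          apply Nat.mul_le_mul_right
          rw [h9'] at *; exact h2r
      _ = (3 ^ (n - 1) * 3) * n := by ring
      _ = 3 ^ n * n := by
          congr 1
          rw [← pow_succ]
          congr 1
          omega
      _ ≤ 3 ^ n * n + 1 := Nat.le_succ _


lemma sat_gf {w : Word Ap} {x : E Ap} :
    Sat w (E.gf x) ↔ ∀ i, ∃ j, i ≤ j ∧ Sat (suff w j) x := Iff.rfl

lemma sat_fg {w : Word Ap} {x : E Ap} :
    Sat w (E.fg x) ↔ ∃ i, ∀ j, i ≤ j → Sat (suff w j) x := Iff.rfl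

lemma sat_and {w : Word Ap} {a b : E Ap} :
    Sat w (E.and a b) ↔ Sat w a ∧ Sat w b := Iff.rfl

lemma sat_or {w : Word Ap} {a b : E Ap} :
    Sat w (E.or a b) ↔ Sat w a ∨ Sat w b := Iff.rfl

/-- Soundness of the advice substitutions: whenever the side conditions hold
(from threshold `i₀` on), the substituted formulas underapproximate the
original ones. -/
lemma sound (M N : List (E Ap)) (w : Word Ap) (i₀ : ℕ)
    (HM : ∀ ψ ∈ M, ∀ j, i₀ ≤ j → Sat (suff w j) (nu N (argl ψ)))
    (HN : ∀ ψ ∈ N, ∀ i, ∃ j, i ≤ j ∧ Sat (suff w j) (mu M (argr ψ))) :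
    ∀ x : E Ap, hasLimit x = false → ∀ j, i₀ ≤ j →
      (Sat (suff w j) (mu M x) → Sat (suff w j) x) ∧
      (Sat (suff w j) (nu N x) → Sat (suff w j) x) := by
  intro x
  induction x with
  | tt => intro _ j _; exact ⟨fun h => h, fun h => h⟩
  | ff => intro _ j _; exact ⟨fun h => h, fun h => h⟩
  | pos a => intro _ j _; exact ⟨fun h => h, fun h => h⟩
  | nlit a => intro _ j _; exact ⟨fun h => h, fun h => h⟩
  | and a b iha ihb =>
      intro hL j hj
      simp only [hasLimit, Bool.or_eq_false_iff] at hL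
      constructor
      · rintro ⟨h1, h2⟩
        exact ⟨(iha hL.1 j hj).1 h1, (ihb hL.2 j hj).1 h2⟩
      · rintro ⟨h1, h2⟩
        exact ⟨(iha hL.1 j hj).2 h1, (ihb hL.2 j hj).2 h2⟩
  | or a b iha ihb =>
      intro hL j hj
      simp only [hasLimit, Bool.or_eq_false_iff] at hL
      constructor
      · rintro (h1 | h2)
        · exact Or.inl ((iha hL.1 j hj).1 h1)
        · exact Or.inr ((ihb hL.2 j hj).1 h2)
      · rintro (h1 | h2)
        · exact Or.inl ((iha hL.1 j hj).2 h1)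
        · exact Or.inr ((ihb hL.2 j hj).2 h2)
  | next a iha =>
      intro hL j hj
      simp only [hasLimit] at hL
      constructor
      · intro h
        rw [show mu M (E.next a) = E.next (mu M a) from rfl, sat_next_shift] at h
        rw [sat_next_shift]
        exact (iha hL (1 + j) (by omega)).1 h
      · intro h
        rw [show nu N (E.next a) = E.next (nu N a) from rfl, sat_next_shift] at h
        rw [sat_next_shift]
        exact (iha hL (1 + j) (by omega)).2 h
  | untl a b iha ihb =>
      intro hL j hj
      simp only [hasLimit, Bool.or_eq_false_iff] at hL
      constructor
      · intro h
        rw [show mu M (E.untl a b) = E.untl (mu M a) (mu M b) from rfl,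
          sat_untl_shift] at h
        rw [sat_untl_shift]
        obtain ⟨k, hb, ha⟩ := h
        exact ⟨k, (ihb hL.2 (k + j) (by omega)).1 hb,
          fun i hik => (iha hL.1 (i + j) (by omega)).1 (ha i hik)⟩
      · intro h
        by_cases hn : E.untl a b ∈ N
        · rw [show nu N (E.untl a b) = E.wuntl (nu N a) (nu N b) from by
            simp [nu, hn], sat_wuntl_shift] at h
          rw [sat_untl_shift]
          rcases h with hG | ⟨k, hb, ha⟩
          · obtain ⟨j', hj', hsat⟩ := HN _ hn (max j i₀)
            have hji : j ≤ j' := le_trans (le_max_left _ _) hj'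
            have hsat' : Sat (suff w j') (mu M b) := by simpa [argr] using hsat
            have hb := (ihb hL.2 j' (le_trans (le_max_right _ _) hj')).1 hsat'
            refine ⟨j' - j, ?_, ?_⟩
            · rwa [Nat.sub_add_cancel hji]
            · intro i _
              exact (iha hL.1 (i + j) (by omega)).2 (hG i)
          · exact ⟨k, (ihb hL.2 (k + j) (by omega)).2 hb,
              fun i hik => (iha hL.1 (i + j) (by omega)).2 (ha i hik)⟩
        · rw [show nu N (E.untl a b) = E.ff from by simp [nu, hn]] at h
          exact h.elim
  | wuntl a b iha ihb =>
      intro hL j hj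
      simp only [hasLimit, Bool.or_eq_false_iff] at hL
      constructor
      · intro h
        by_cases hm : E.wuntl a b ∈ M
        · rw [sat_wuntl_shift]
          left
          intro k
          have hnu : Sat (suff w (k + j)) (nu N a) := by
            simpa [argl] using HM _ hm (k + j) (by omega)
          exact (iha hL.1 (k + j) (by omega)).2 hnu
        · rw [show mu M (E.wuntl a b) = E.untl (mu M a) (mu M b) from by
            simp [mu, hm], sat_untl_shift] at h
          rw [sat_wuntl_shift]
          obtain ⟨k, hb, ha⟩ := h
          exact Or.inr ⟨k, (ihb hL.2 (k + j) (by omega)).1 hb,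
            fun i hik => (iha hL.1 (i + j) (by omega)).1 (ha i hik)⟩
      · intro h
        rw [show nu N (E.wuntl a b) = E.wuntl (nu N a) (nu N b) from rfl,
          sat_wuntl_shift] at h
        rw [sat_wuntl_shift]
        rcases h with hG | ⟨k, hb, ha⟩
        · exact Or.inl fun k => (iha hL.1 (k + j) (by omega)).2 (hG k)
        · exact Or.inr ⟨k, (ihb hL.2 (k + j) (by omega)).2 hb,
            fun i hik => (iha hL.1 (i + j) (by omega)).2 (ha i hik)⟩
  | gf a iha => intro hL; simp [hasLimit] at hL
  | fg a iha => intro hL; simp [hasLimit] at hL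

/-- Completeness of the advice substitutions: for the advice sets determined by
the word `w`, the substituted formulas overapproximate the original ones from
some threshold `i₁` on. -/
lemma complete (W₀ U₀ M N : List (E Ap)) (w : Word Ap) (i₁ : ℕ)
    (Hw : ∀ a b : E Ap, E.wuntl a b ∈ W₀ →
      (∃ i, ∀ j, i ≤ j → Sat (suff w j) a) → E.wuntl a b ∈ M)
    (Hu : ∀ a b : E Ap, E.untl a b ∈ U₀ → E.untl a b ∉ N →
      ∀ j, i₁ ≤ j → ¬ Sat (suff w j) b) :
    ∀ x : E Ap, hasLimit x = false →
      (∀ z ∈ Wsubs x, z ∈ W₀) → (∀ z ∈ Usubs x, z ∈ U₀) →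
      ∀ j, i₁ ≤ j →
      (Sat (suff w j) x → Sat (suff w j) (mu M x)) ∧
      (Sat (suff w j) x → Sat (suff w j) (nu N x)) := by
  intro x
  induction x with
  | tt => intro _ _ _ j _; exact ⟨fun h => h, fun h => h⟩
  | ff => intro _ _ _ j _; exact ⟨fun h => h, fun h => h⟩
  | pos a => intro _ _ _ j _; exact ⟨fun h => h, fun h => h⟩
  | nlit a => intro _ _ _ j _; exact ⟨fun h => h, fun h => h⟩
  | and a b iha ihb =>
      intro hL hWs hUs j hj
      simp only [hasLimit, Bool.or_eq_false_iff] at hL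
      have iha' := iha hL.1
        (fun z hz => hWs z (List.mem_append.2 (Or.inl hz)))
        (fun z hz => hUs z (List.mem_append.2 (Or.inl hz)))
      have ihb' := ihb hL.2
        (fun z hz => hWs z (List.mem_append.2 (Or.inr hz)))
        (fun z hz => hUs z (List.mem_append.2 (Or.inr hz)))
      constructor
      · rintro ⟨h1, h2⟩
        exact ⟨(iha' j hj).1 h1, (ihb' j hj).1 h2⟩
      · rintro ⟨h1, h2⟩
        exact ⟨(iha' j hj).2 h1, (ihb' j hj).2 h2⟩
  | or a b iha ihb =>
      intro hL hWs hUs j hj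
      simp only [hasLimit, Bool.or_eq_false_iff] at hL
      have iha' := iha hL.1
        (fun z hz => hWs z (List.mem_append.2 (Or.inl hz)))
        (fun z hz => hUs z (List.mem_append.2 (Or.inl hz)))
      have ihb' := ihb hL.2
        (fun z hz => hWs z (List.mem_append.2 (Or.inr hz)))
        (fun z hz => hUs z (List.mem_append.2 (Or.inr hz)))
      constructor
      · rintro (h1 | h2)
        · exact Or.inl ((iha' j hj).1 h1)
        · exact Or.inr ((ihb' j hj).1 h2)
      · rintro (h1 | h2)
        · exact Or.inl ((iha' j hj).2 h1)
        · exact Or.inr ((ihb' j hj).2 h2)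
  | next a iha =>
      intro hL hWs hUs j hj
      simp only [hasLimit] at hL
      have iha' := iha hL hWs hUs
      constructor
      · intro h
        rw [show Sat (suff w j) (E.next a) ↔ Sat (suff w (1 + j)) a from
          sat_next_shift] at h
        rw [show mu M (E.next a) = E.next (mu M a) from rfl, sat_next_shift]
        exact (iha' (1 + j) (by omega)).1 h
      · intro h
        rw [show Sat (suff w j) (E.next a) ↔ Sat (suff w (1 + j)) a from
          sat_next_shift] at h
        rw [show nu N (E.next a) = E.next (nu N a) from rfl, sat_next_shift]
        exact (iha' (1 + j) (by omega)).2 h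
  | untl a b iha ihb =>
      intro hL hWs hUs j hj
      simp only [hasLimit, Bool.or_eq_false_iff] at hL
      have iha' := iha hL.1
        (fun z hz => hWs z (List.mem_append.2 (Or.inl hz)))
        (fun z hz => hUs z (List.mem_cons_of_mem _ (List.mem_append.2 (Or.inl hz))))
      have ihb' := ihb hL.2
        (fun z hz => hWs z (List.mem_append.2 (Or.inr hz)))
        (fun z hz => hUs z (List.mem_cons_of_mem _ (List.mem_append.2 (Or.inr hz))))
      constructor
      · intro h
        rw [sat_untl_shift] at h
        rw [show mu M (E.untl a b) = E.untl (mu M a) (mu M b) from rfl,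
          sat_untl_shift]
        obtain ⟨k, hb, ha⟩ := h
        exact ⟨k, (ihb' (k + j) (by omega)).1 hb,
          fun i hik => (iha' (i + j) (by omega)).1 (ha i hik)⟩
      · intro h
        rw [sat_untl_shift] at h
        obtain ⟨k, hb, ha⟩ := h
        by_cases hn : E.untl a b ∈ N
        · rw [show nu N (E.untl a b) = E.wuntl (nu N a) (nu N b) from by
            simp [nu, hn], sat_wuntl_shift]
          exact Or.inr ⟨k, (ihb' (k + j) (by omega)).2 hb,
            fun i hik => (iha' (i + j) (by omega)).2 (ha i hik)⟩
        · exact absurd hb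
            (Hu a b (hUs _ (List.mem_cons_self)) hn (k + j) (by omega))
  | wuntl a b iha ihb =>
      intro hL hWs hUs j hj
      simp only [hasLimit, Bool.or_eq_false_iff] at hL
      have iha' := iha hL.1
        (fun z hz => hWs z (List.mem_cons_of_mem _ (List.mem_append.2 (Or.inl hz))))
        (fun z hz => hUs z (List.mem_append.2 (Or.inl hz)))
      have ihb' := ihb hL.2
        (fun z hz => hWs z (List.mem_cons_of_mem _ (List.mem_append.2 (Or.inr hz))))
        (fun z hz => hUs z (List.mem_append.2 (Or.inr hz)))
      constructor
      · intro h
        by_cases hm : E.wuntl a b ∈ M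
        · rw [show mu M (E.wuntl a b) = E.tt from by simp [mu, hm]]
          trivial
        · rw [sat_wuntl_shift] at h
          rcases h with hG | ⟨k, hb, ha⟩
          · exfalso
            apply hm
            apply Hw a b (hWs _ (List.mem_cons_self))
            refine ⟨j, fun j' hj' => ?_⟩
            have := hG (j' - j)
            rwa [Nat.sub_add_cancel hj'] at this
          · rw [show mu M (E.wuntl a b) = E.untl (mu M a) (mu M b) from by
              simp [mu, hm], sat_untl_shift]
            exact ⟨k, (ihb' (k + j) (by omega)).1 hb,
              fun i hik => (iha' (i + j) (by omega)).1 (ha i hik)⟩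
      · intro h
        rw [sat_wuntl_shift] at h
        rw [show nu N (E.wuntl a b) = E.wuntl (nu N a) (nu N b) from rfl,
          sat_wuntl_shift]
        rcases h with hG | ⟨k, hb, ha⟩
        · exact Or.inl fun k => (iha' (k + j) (by omega)).2 (hG k)
        · exact Or.inr ⟨k, (ihb' (k + j) (by omega)).2 hb,
            fun i hik => (iha' (i + j) (by omega)).2 (ha i hik)⟩
  | gf a iha => intro hL; simp [hasLimit] at hL
  | fg a iha => intro hL; simp [hasLimit] at hL


/-- The list of conjuncts of one disjunct: a head formula together with the
side conditions determined by the advice pair `(M, N)`. -/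
noncomputable def conjuncts (M N : List (E Ap)) (hd : E Ap) : List (E Ap) :=
  hd :: ((M.map fun ψ => E.fg (nu N (argl ψ))) ++ N.map fun ψ => E.gf (mu M (argr ψ)))

/-- All advice pairs for `φ`. -/
noncomputable def pairsL (φ : E Ap) : List (List (E Ap) × List (E Ap)) :=
  (Wsubs φ).sublists.product (Usubs φ).sublists

/-- The normal form for `GF φ`. -/
noncomputable def chiGF (φ : E Ap) : E Ap :=
  bigOr ((pairsL φ).map fun p => bigAnd (conjuncts p.1 p.2 (E.gf (mu p.1 φ))))

/-- The normal form for `FG φ`. -/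
noncomputable def chiFG (φ : E Ap) : E Ap :=
  bigOr ((pairsL φ).map fun p => bigAnd (conjuncts p.1 p.2 (E.fg (nu p.2 φ))))

lemma side_conditions {M N : List (E Ap)} {hd : E Ap} {w : Word Ap}
    (h : Sat w (bigAnd (conjuncts M N hd))) :
    Sat w hd ∧ ∃ i₀,
      (∀ ψ ∈ M, ∀ j, i₀ ≤ j → Sat (suff w j) (nu N (argl ψ))) ∧
      (∀ ψ ∈ N, ∀ i, ∃ j, i ≤ j ∧ Sat (suff w j) (mu M (argr ψ))) := by
  rw [sat_bigAnd] at h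
  have hhd : Sat w hd := h hd (List.mem_cons_self)
  have hfgs : ∀ ψ ∈ M, Sat w (E.fg (nu N (argl ψ))) := fun ψ hψ =>
    h _ (List.mem_cons_of_mem _ (List.mem_append.2 (Or.inl (List.mem_map_of_mem hψ))))
  have hgfs : ∀ ψ ∈ N, Sat w (E.gf (mu M (argr ψ))) := fun ψ hψ =>
    h _ (List.mem_cons_of_mem _ (List.mem_append.2 (Or.inr (List.mem_map_of_mem hψ))))
  obtain ⟨i₀, hi₀⟩ := exists_threshold
    (fun ψ j => Sat (suff w j) (nu N (argl ψ))) M (fun ψ hψ => (sat_fg).1 (hfgs ψ hψ))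
  exact ⟨hhd, i₀, hi₀, fun ψ hψ => (sat_gf).1 (hgfs ψ hψ)⟩

lemma gf_sound (φ : E Ap) (hL : hasLimit φ = false) (M N : List (E Ap)) (w : Word Ap)
    (h : Sat w (bigAnd (conjuncts M N (E.gf (mu M φ))))) : Sat w (E.gf φ) := by
  obtain ⟨hhd, i₀, HM, HN⟩ := side_conditions h
  have S := sound M N w i₀ HM HN φ hL
  rw [sat_gf] at hhd ⊢
  intro i
  obtain ⟨j, hj, hs⟩ := hhd (max i i₀)
  exact ⟨j, le_trans (le_max_left _ _) hj,
    (S j (le_trans (le_max_right _ _) hj)).1 hs⟩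

lemma fg_sound (φ : E Ap) (hL : hasLimit φ = false) (M N : List (E Ap)) (w : Word Ap)
    (h : Sat w (bigAnd (conjuncts M N (E.fg (nu N φ))))) : Sat w (E.fg φ) := by
  obtain ⟨hhd, i₀, HM, HN⟩ := side_conditions h
  have S := sound M N w i₀ HM HN φ hL
  rw [sat_fg] at hhd ⊢
  obtain ⟨i₂, h₂⟩ := hhd
  exact ⟨max i₀ i₂, fun j hj =>
    (S j (le_trans (le_max_left _ _) hj)).2 (h₂ j (le_trans (le_max_right _ _) hj))⟩

lemma advice_exists (φ : E Ap) (hL : hasLimit φ = false) (w : Word Ap) :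
    ∃ M N : List (E Ap), ∃ i₁ : ℕ, (M, N) ∈ pairsL φ ∧
      (∀ j, i₁ ≤ j → (Sat (suff w j) φ → Sat (suff w j) (mu M φ)) ∧
        (Sat (suff w j) φ → Sat (suff w j) (nu N φ))) ∧
      (∀ ψ ∈ M, Sat w (E.fg (nu N (argl ψ)))) ∧
      (∀ ψ ∈ N, Sat w (E.gf (mu M (argr ψ)))) := by
  set M := (Wsubs φ).filter
    (fun ψ => decide (∃ i, ∀ j, i ≤ j → Sat (suff w j) (argl ψ))) with hMdef
  set N := (Usubs φ).filter
    (fun ψ => decide (∀ i, ∃ j, i ≤ j ∧ Sat (suff w j) (argr ψ))) with hNdef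
  have hthr : ∀ ψ ∈ Usubs φ, ∃ i, ∀ j, i ≤ j →
      (ψ ∉ N → ¬ Sat (suff w j) (argr ψ)) := by
    intro ψ hψ
    by_cases hn : ψ ∈ N
    · exact ⟨0, fun j _ hcon => (hcon hn).elim⟩
    · have hnot : ¬ (∀ i, ∃ j, i ≤ j ∧ Sat (suff w j) (argr ψ)) := by
        intro hc
        exact hn (List.mem_filter.2 ⟨hψ, decide_eq_true hc⟩)
      push_neg at hnot
      obtain ⟨i, hi⟩ := hnot
      exact ⟨i, fun j hj _ => hi j hj⟩
  obtain ⟨i₁, hi₁⟩ := exists_threshold _ (Usubs φ) hthr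
  have Hw : ∀ a b : E Ap, E.wuntl a b ∈ Wsubs φ →
      (∃ i, ∀ j, i ≤ j → Sat (suff w j) a) → E.wuntl a b ∈ M := by
    intro a b hmem hfg
    refine List.mem_filter.2 ⟨hmem, decide_eq_true ?_⟩
    simpa [argl] using hfg
  have Hu : ∀ a b : E Ap, E.untl a b ∈ Usubs φ → E.untl a b ∉ N →
      ∀ j, i₁ ≤ j → ¬ Sat (suff w j) b := by
    intro a b hmem hn j hj
    have := hi₁ _ hmem j hj hn
    simpa [argr] using this
  have C := complete (Wsubs φ) (Usubs φ) M N w i₁ Hw Hu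
  refine ⟨M, N, i₁, ?_, ?_, ?_, ?_⟩
  · exact List.pair_mem_product.2
      ⟨List.mem_sublists.2 (List.filter_sublist),
       List.mem_sublists.2 (List.filter_sublist)⟩
  · exact fun j hj => C φ hL (fun z hz => hz) (fun z hz => hz) j hj
  · intro ψ hψ
    have hψW : ψ ∈ Wsubs φ := (List.mem_filter.1 hψ).1
    have hfg : ∃ i, ∀ j, i ≤ j → Sat (suff w j) (argl ψ) :=
      of_decide_eq_true (List.mem_filter.1 hψ).2
    obtain ⟨a, b, rfl, hLa, hWa, hUa⟩ := Wsubs_closure φ hL ψ hψW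
    rw [sat_fg]
    obtain ⟨i₃, h₃⟩ := hfg
    refine ⟨max i₃ i₁, fun j hj => ?_⟩
    have hsa : Sat (suff w j) a := by
      simpa [argl] using h₃ j (le_trans (le_max_left _ _) hj)
    have := (C a hLa hWa hUa j (le_trans (le_max_right _ _) hj)).2 hsa
    simpa [argl] using this
  · intro ψ hψ
    have hψU : ψ ∈ Usubs φ := (List.mem_filter.1 hψ).1
    have hgf : ∀ i, ∃ j, i ≤ j ∧ Sat (suff w j) (argr ψ) :=
      of_decide_eq_true (List.mem_filter.1 hψ).2
    obtain ⟨a, b, rfl, hLb, hWb, hUb⟩ := Usubs_closure φ hL ψ hψU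
    rw [sat_gf]
    intro i
    obtain ⟨j, hj, hs⟩ := hgf (max i i₁)
    refine ⟨j, le_trans (le_max_left _ _) hj, ?_⟩
    have hsb : Sat (suff w j) b := by simpa [argr] using hs
    have := (C b hLb hWb hUb j (le_trans (le_max_right _ _) hj)).1 hsb
    simpa [argr] using this


lemma equiv_chiGF (φ : E Ap) (hL : hasLimit φ = false) : Equiv (E.gf φ) (chiGF φ) := by
  intro w
  rw [chiGF, sat_bigOr]
  constructor
  · intro h
    obtain ⟨M, N, i₁, hmem, hC, hfgs, hgfs⟩ := advice_exists φ hL w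
    refine ⟨_, List.mem_map_of_mem hmem, ?_⟩
    rw [sat_bigAnd]
    intro x hx
    rcases List.mem_cons.1 hx with rfl | hx
    · rw [sat_gf] at h ⊢
      intro i
      obtain ⟨j, hj, hs⟩ := h (max i i₁)
      exact ⟨j, le_trans (le_max_left _ _) hj,
        (hC j (le_trans (le_max_right _ _) hj)).1 hs⟩
    · rcases List.mem_append.1 hx with hx | hx
      · obtain ⟨ψ, hψ, rfl⟩ := List.mem_map.1 hx
        exact hfgs ψ hψ
      · obtain ⟨ψ, hψ, rfl⟩ := List.mem_map.1 hx
        exact hgfs ψ hψ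
  · rintro ⟨x, hx, hs⟩
    obtain ⟨p, hp, rfl⟩ := List.mem_map.1 hx
    exact gf_sound φ hL p.1 p.2 w hs

lemma equiv_chiFG (φ : E Ap) (hL : hasLimit φ = false) : Equiv (E.fg φ) (chiFG φ) := by
  intro w
  rw [chiFG, sat_bigOr]
  constructor
  · intro h
    obtain ⟨M, N, i₁, hmem, hC, hfgs, hgfs⟩ := advice_exists φ hL w
    refine ⟨_, List.mem_map_of_mem hmem, ?_⟩
    rw [sat_bigAnd]
    intro x hx
    rcases List.mem_cons.1 hx with rfl | hx
    · rw [sat_fg] at h ⊢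
      obtain ⟨i₂, h₂⟩ := h
      exact ⟨max i₂ i₁, fun j hj =>
        (hC j (le_trans (le_max_right _ _) hj)).2 (h₂ j (le_trans (le_max_left _ _) hj))⟩
    · rcases List.mem_append.1 hx with hx | hx
      · obtain ⟨ψ, hψ, rfl⟩ := List.mem_map.1 hx
        exact hfgs ψ hψ
      · obtain ⟨ψ, hψ, rfl⟩ := List.mem_map.1 hx
        exact hgfs ψ hψ
  · rintro ⟨x, hx, hs⟩
    obtain ⟨p, hp, rfl⟩ := List.mem_map.1 hx
    exact fg_sound φ hL p.1 p.2 w hs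

lemma nf_conjuncts (φ : E Ap) (hL : hasLimit φ = false) (M N : List (E Ap))
    (hM : ∀ ψ ∈ M, ψ ∈ Wsubs φ) (hN : ∀ ψ ∈ N, ψ ∈ Usubs φ)
    (hd : E Ap) (hhd : NormalForm hd) :
    NormalForm (bigAnd (conjuncts M N hd)) := by
  apply normalForm_bigAnd
  intro y hy
  rcases List.mem_cons.1 hy with rfl | hy
  · exact hhd
  rcases List.mem_append.1 hy with hy | hy
  · obtain ⟨ψ, hψ, rfl⟩ := List.mem_map.1 hy
    obtain ⟨a, b, rfl, hLa, _, _⟩ := Wsubs_closure φ hL ψ (hM ψ hψ)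
    simp only [argl]
    exact normalForm_fg_of _ (hasU_nu _ _ hLa) (hasLimit_nu _ _ hLa)
  · obtain ⟨ψ, hψ, rfl⟩ := List.mem_map.1 hy
    obtain ⟨a, b, rfl, hLb, _, _⟩ := Usubs_closure φ hL ψ (hN ψ hψ)
    simp only [argr]
    exact normalForm_gf_of _ (hasW_mu _ _ hLb) (hasLimit_mu _ _ hLb)

lemma mem_pairsL {φ : E Ap} {p : List (E Ap) × List (E Ap)} (hp : p ∈ pairsL φ) :
    (∀ ψ ∈ p.1, ψ ∈ Wsubs φ) ∧ (∀ ψ ∈ p.2, ψ ∈ Usubs φ) ∧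
    p.1.length ≤ (Wsubs φ).length ∧ p.2.length ≤ (Usubs φ).length := by
  obtain ⟨h1, h2⟩ := List.pair_mem_product.1 hp
  have s1 := List.mem_sublists.1 h1
  have s2 := List.mem_sublists.1 h2
  exact ⟨fun ψ h => s1.subset h, fun ψ h => s2.subset h, s1.length_le, s2.length_le⟩

lemma nf_chiGF (φ : E Ap) (hL : hasLimit φ = false) : NormalForm (chiGF φ) := by
  apply normalForm_bigOr
  intro x hx
  obtain ⟨p, hp, rfl⟩ := List.mem_map.1 hx
  obtain ⟨h1, h2, _, _⟩ := mem_pairsL hp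
  exact nf_conjuncts φ hL p.1 p.2 h1 h2 _
    (normalForm_gf_of _ (hasW_mu _ _ hL) (hasLimit_mu _ _ hL))

lemma nf_chiFG (φ : E Ap) (hL : hasLimit φ = false) : NormalForm (chiFG φ) := by
  apply normalForm_bigOr
  intro x hx
  obtain ⟨p, hp, rfl⟩ := List.mem_map.1 hx
  obtain ⟨h1, h2, _, _⟩ := mem_pairsL hp
  exact nf_conjuncts φ hL p.1 p.2 h1 h2 _
    (normalForm_fg_of _ (hasU_nu _ _ hL) (hasLimit_nu _ _ hL))

lemma size_disjunct_le (φ : E Ap) (M N : List (E Ap))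
    (hM : ∀ ψ ∈ M, ψ ∈ Wsubs φ) (hN : ∀ ψ ∈ N, ψ ∈ Usubs φ)
    (hMl : M.length ≤ (Wsubs φ).length) (hNl : N.length ≤ (Usubs φ).length)
    (hd : E Ap) (hhd : size hd ≤ size φ + 1) :
    size (bigAnd (conjuncts M N hd)) + 1 ≤
      (size φ + 2) * (1 + ((Wsubs φ).length + (Usubs φ).length)) := by
  have hc : ∀ x ∈ conjuncts M N hd, size x ≤ size φ + 1 := by
    intro x hx
    rcases List.mem_cons.1 hx with rfl | hx
    · exact hhd
    rcases List.mem_append.1 hx with hx | hx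
    · obtain ⟨ψ, hψ, rfl⟩ := List.mem_map.1 hx
      have h1 : size (argl ψ) < size φ := size_argl_lt φ ψ (hM ψ hψ)
      have h2 : size (nu N (argl ψ)) ≤ size (argl ψ) := size_nu_le N _
      simp only [size]
      omega
    · obtain ⟨ψ, hψ, rfl⟩ := List.mem_map.1 hx
      have h1 : size (argr ψ) < size φ := size_argr_lt φ ψ (hN ψ hψ)
      have h2 : size (mu M (argr ψ)) ≤ size (argr ψ) := size_mu_le M _
      simp only [size]
      omega
  have hlen : (conjuncts M N hd).length = 1 + (M.length + N.length) := by
    simp [conjuncts]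
    omega
  have h := size_bigAnd_le (size φ + 1) (conjuncts M N hd) (by simp [conjuncts]) hc
  rw [hlen] at h
  calc size (bigAnd (conjuncts M N hd)) + 1
      ≤ (size φ + 2) * (1 + (M.length + N.length)) := h
    _ ≤ (size φ + 2) * (1 + ((Wsubs φ).length + (Usubs φ).length)) := by
        apply Nat.mul_le_mul_left
        omega

lemma size_chi_le (φ : E Ap) (F : List (E Ap) × List (E Ap) → E Ap)
    (hF : ∀ p ∈ pairsL φ, size (F p) ≤ size φ + 1) :
    size (bigOr ((pairsL φ).map fun p => bigAnd (conjuncts p.1 p.2 (F p)))) ≤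
      3 ^ size φ * size φ := by
  have hr : 2 * ((Wsubs φ).length + (Usubs φ).length) < size φ := count_lt_size φ
  have hn1 : 1 ≤ size φ := size_pos' φ
  have hpos : 0 < (size φ + 2) * (1 + ((Wsubs φ).length + (Usubs φ).length)) :=
    Nat.mul_pos (by omega) (by omega)
  have hforall : ∀ x ∈ (pairsL φ).map (fun p' => bigAnd (conjuncts p'.1 p'.2 (F p'))),
      size x ≤ (size φ + 2) * (1 + ((Wsubs φ).length + (Usubs φ).length)) - 1 := by
    intro x hx
    obtain ⟨p', hp', rfl⟩ := List.mem_map.1 hx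
    obtain ⟨h1, h2, h3, h4⟩ := mem_pairsL hp'
    have hd := size_disjunct_le φ p'.1 p'.2 h1 h2 h3 h4 (F p') (hF p' hp')
    omega
  have hlen : ((pairsL φ).map (fun p' => bigAnd (conjuncts p'.1 p'.2 (F p')))).length
      = 2 ^ (Wsubs φ).length * 2 ^ (Usubs φ).length := by
    rw [List.length_map, show pairsL φ = (Wsubs φ).sublists ×ˢ (Usubs φ).sublists from rfl,
      List.length_product, List.length_sublists, List.length_sublists]
  have hlpos : 0 < ((pairsL φ).map (fun p' => bigAnd (conjuncts p'.1 p'.2 (F p')))).length := by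
    rw [hlen]
    have h1 : 0 < 2 ^ (Wsubs φ).length := Nat.pow_pos (show 0 < 2 by omega)
    have h2 : 0 < 2 ^ (Usubs φ).length := Nat.pow_pos (show 0 < 2 by omega)
    exact Nat.mul_pos h1 h2
  have hne : (pairsL φ).map (fun p' => bigAnd (conjuncts p'.1 p'.2 (F p'))) ≠ [] :=
    List.length_pos_iff.1 hlpos
  have h := size_bigOr_le ((size φ + 2) * (1 + ((Wsubs φ).length + (Usubs φ).length)) - 1)
    _ hne hforall
  rw [hlen] at h
  have hcancel : (size φ + 2) * (1 + ((Wsubs φ).length + (Usubs φ).length)) - 1 + 1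
      = (size φ + 2) * (1 + ((Wsubs φ).length + (Usubs φ).length)) := by omega
  rw [hcancel] at h
  have harith := arith_bound (size φ) ((Wsubs φ).length + (Usubs φ).length) hn1 hr
  have heq : (size φ + 2) * (1 + ((Wsubs φ).length + (Usubs φ).length)) *
      (2 ^ (Wsubs φ).length * 2 ^ (Usubs φ).length)
      = 2 ^ ((Wsubs φ).length + (Usubs φ).length) *
        (((Wsubs φ).length + (Usubs φ).length + 1) * (size φ + 2)) := by
    rw [pow_add]
    ring
  rw [heq] at h
  omega

/-- Stage 3: for every extended LTL formula `φ` without limit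
operators, each of `GF φ` and `FG φ` is equivalent to a formula in normal form
with at most `3^{‖φ‖}·‖φ‖` nodes. -/
theorem stage3_normalForm {Ap : Type} [Fintype Ap] (φ : E Ap)
    (hφ : hasLimit φ = false) :
    (∃ χ : E Ap, NormalForm χ ∧ Equiv (E.gf φ) χ ∧ size χ ≤ 3 ^ size φ * size φ) ∧
    (∃ χ : E Ap, NormalForm χ ∧ Equiv (E.fg φ) χ ∧ size χ ≤ 3 ^ size φ * size φ) := by
  refine ⟨⟨chiGF φ, nf_chiGF φ hφ, equiv_chiGF φ hφ, ?_⟩,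
    ⟨chiFG φ, nf_chiFG φ hφ, equiv_chiFG φ hφ, ?_⟩⟩
  · refine size_chi_le φ (fun p => E.gf (mu p.1 φ)) ?_
    intro p _
    have := size_mu_le p.1 φ
    simp only [size]
    omega
  · refine size_chi_le φ (fun p => E.fg (nu p.2 φ)) ?_
    intro p _
    have := size_nu_le p.2 φ
    simp only [size]
    omega

end ExtLTL
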